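/- If an irrational number ω ∈ (0,1) satisfies e^{(κ−T₋)n} ≤ M_n(ω) ≤ e^{(κ+T₊)n} for all n ≥ N, for some T₋, T₊ > 0 and N ∈ ℕ, then there exists C > 0 such that ω is (C,τ)-Diophantine with τ = 1 + (T₊ + T₋)/log φ, where φ = (1+√5)/2 is the golden ratio. -/

import Mathlib

open Set

noncomputable section

/-- The Gauss map `G(x) = 1/x - ⌊1/x⌋`. -/
def gaussMap (x : ℝ) : ℝ := 1 / x - (⌊1 / x⌋ : ℝ)

/-- The `n`-th partial quotient `a_n(ω) = ⌊1 / G^{n-1}(ω)⌋` (for `n ≥ 1`). -/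
def pq (ω : ℝ) (n : ℕ) : ℤ := ⌊1 / (gaussMap^[n - 1] ω)⌋

/-- `M_n(ω) = a_1(ω) ⋯ a_n(ω)`. -/
def Mprod (ω : ℝ) (n : ℕ) : ℝ := ∏ j ∈ Finset.Icc 1 n, (pq ω j : ℝ)

/-- Khintchine's constant exponent `κ`. -/
def kappa : ℝ := ∫ x in Ioo (0 : ℝ) 1, Real.log (⌊1 / x⌋ : ℝ) / ((1 + x) * Real.log 2)

/-- `ω` is `(C,τ)`-Diophantine: `|qω − p| ≥ C/q^τ` for all integers `p` and positive integers
`q`. -/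
def IsDiophantine (C τ ω : ℝ) : Prop :=
  ∀ p q : ℤ, 0 < q → C / (q : ℝ) ^ τ ≤ |(q : ℝ) * ω - (p : ℝ)|

end

open GenContFract

local notation "φ" => (1 + Real.sqrt 5) / 2

noncomputable def AB (ω : ℝ) : ℕ → ℤ × ℤ
  | 0 => (1, 0)
  | 1 => (0, 1)
  | n + 2 => (pq ω (n + 1) * (AB ω (n + 1)).1 + (AB ω n).1,
              pq ω (n + 1) * (AB ω (n + 1)).2 + (AB ω n).2)

lemma two_step {P : ℕ → Prop} (h0 : P 0) (h1 : P 1)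
    (hstep : ∀ n, P n → P (n + 1) → P (n + 2)) : ∀ n, P n := by
  have key : ∀ n, P n ∧ P (n + 1) := by
    intro n
    induction n with
    | zero => exact ⟨h0, h1⟩
    | succ k ih => exact ⟨ih.2, hstep k ih.1 ih.2⟩
  exact fun n => (key n).1

lemma gauss_step {x : ℝ} (hx : Irrational x) (hm : x ∈ Ioo (0:ℝ) 1) :
    Irrational (gaussMap x) ∧ gaussMap x ∈ Ioo (0:ℝ) 1 := by
  have h1 : gaussMap x = Int.fract x⁻¹ := by
    rw [gaussMap, Int.fract, one_div]
  have hinv : Irrational x⁻¹ := hx.inv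
  have hirr : Irrational (gaussMap x) := by
    rw [h1]; exact hinv.sub_intCast _
  refine ⟨hirr, ?_, ?_⟩
  · rw [h1]
    rcases (Int.fract_nonneg (x⁻¹ : ℝ)).lt_or_eq with h | h
    · exact h
    · exfalso
      have h2 : Irrational (Int.fract x⁻¹) := hinv.sub_intCast _
      rw [← h] at h2
      exact h2 ⟨0, by norm_num⟩
  · rw [h1]; exact Int.fract_lt_one _

lemma iter_mem {ω : ℝ} (hω : Irrational ω) (hm : ω ∈ Ioo (0:ℝ) 1) (n : ℕ) :
    Irrational (gaussMap^[n] ω) ∧ gaussMap^[n] ω ∈ Ioo (0:ℝ) 1 := by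
  induction n with
  | zero => exact ⟨hω, hm⟩
  | succ k ih =>
    rw [Function.iterate_succ_apply']
    exact gauss_step ih.1 ih.2

lemma pq_one_le {ω : ℝ} (hω : Irrational ω) (hm : ω ∈ Ioo (0:ℝ) 1) (n : ℕ) :
    1 ≤ pq ω (n + 1) := by
  have h := (iter_mem hω hm n).2
  have : (1:ℝ) ≤ 1 / gaussMap^[n] ω := by
    rw [le_div_iff₀ h.1]; linarith [h.2]
  exact Int.le_floor.mpr (by exact_mod_cast this)

lemma stream_eq {ω : ℝ} (hω : Irrational ω) (hm : ω ∈ Ioo (0:ℝ) 1) (n : ℕ) :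
    IntFractPair.stream ω n =
      some ⟨if n = 0 then 0 else pq ω n, gaussMap^[n] ω⟩ := by
  induction n with
  | zero =>
    rw [IntFractPair.stream_zero]
    congr 1
    have h0 : ⌊ω⌋ = 0 := Int.floor_eq_zero_iff.mpr ⟨hm.1.le, hm.2⟩
    simp [IntFractPair.of, Int.fract, h0]
  | succ k ih =>
    have hk := iter_mem hω hm k
    have hfr : (gaussMap^[k] ω) ≠ 0 := ne_of_gt hk.2.1
    have := IntFractPair.stream_succ_of_some ih (by simpa using hfr)
    rw [this]
    congr 1
    have hpq : pq ω (k + 1) = ⌊(gaussMap^[k] ω)⁻¹⌋ := by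
      simp [pq, one_div]
    have hfrac : Int.fract (gaussMap^[k] ω)⁻¹ = gaussMap^[k+1] ω := by
      rw [Function.iterate_succ_apply', Int.fract, gaussMap, one_div]
    simp [IntFractPair.of, hpq, hfrac]

lemma not_term {ω : ℝ} (hω : Irrational ω) (hm : ω ∈ Ioo (0:ℝ) 1) (n : ℕ) :
    ¬(GenContFract.of ω).TerminatedAt n := by
  rw [of_terminatedAt_n_iff_succ_nth_intFractPair_stream_eq_none, stream_eq hω hm]
  simp

lemma s_get {ω : ℝ} (hω : Irrational ω) (hm : ω ∈ Ioo (0:ℝ) 1) (n : ℕ) :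
    (GenContFract.of ω).s.get? n = some ⟨1, (pq ω (n + 1) : ℝ)⟩ := by
  have := get?_of_eq_some_of_succ_get?_intFractPair_stream (stream_eq hω hm (n + 1))
  simpa using this

lemma contsAux_eq {ω : ℝ} (hω : Irrational ω) (hm : ω ∈ Ioo (0:ℝ) 1) :
    ∀ n, (GenContFract.of ω).contsAux n =
      ⟨((AB ω n).1 : ℝ), ((AB ω n).2 : ℝ)⟩ := by
  refine two_step ?_ ?_ ?_
  · rw [zeroth_contAux_eq_one_zero]; simp [AB]
  · rw [first_contAux_eq_h_one]
    have h0 : ⌊ω⌋ = 0 := Int.floor_eq_zero_iff.mpr ⟨hm.1.le, hm.2⟩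
    simp [AB, of_h_eq_floor, h0]
  · intro n ih1 ih2
    rw [contsAux_recurrence (s_get hω hm n) ih1 ih2]
    simp only [AB]
    push_cast
    congr 1 <;> ring

lemma AB_det {ω : ℝ} : ∀ n ,
    (AB ω n).1 * (AB ω (n + 1)).2 - (AB ω (n + 1)).1 * (AB ω n).2 = (-1) ^ n := by
  intro n
  induction n with
  | zero => simp [AB]
  | succ k ih =>
    show (AB ω (k+1)).1 * (AB ω (k+2)).2 - (AB ω (k+2)).1 * (AB ω (k+1)).2 = _
    simp only [AB]
    rw [pow_succ]
    nlinarith [ih]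

lemma AB_B_facts {ω : ℝ} (hω : Irrational ω) (hm : ω ∈ Ioo (0:ℝ) 1) :
    ∀ n, 0 ≤ (AB ω n).2 ∧ (AB ω n).2 ≤ (AB ω (n + 1)).2 ∧ 1 ≤ (AB ω (n + 1)).2 := by
  intro n
  induction n with
  | zero => simp [AB]
  | succ k ih =>
    obtain ⟨h0, h1, h2⟩ := ih
    have hb := pq_one_le hω hm k
    refine ⟨by linarith, ?_, ?_⟩ <;>
    · show _ ≤ pq ω (k + 1) * (AB ω (k + 1)).2 + (AB ω k).2
      nlinarith

lemma AB_coprime {ω : ℝ} (n : ℕ) :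
    IsCoprime (AB ω (n + 1)).1 (AB ω (n + 1)).2 := by
  have h := AB_det (ω := ω) n
  exact ⟨(-1) ^ n * (-(AB ω n).2), (-1) ^ n * (AB ω n).1, by
    have : ((-1:ℤ)) ^ n * ((-1:ℤ)) ^ n = 1 := by
      rw [← pow_add]; exact (neg_one_pow_eq_one_iff_even (by norm_num)).mpr ⟨n, rfl⟩
    calc (-1:ℤ) ^ n * (-(AB ω n).2) * (AB ω (n+1)).1 + (-1) ^ n * (AB ω n).1 * (AB ω (n+1)).2
        = (-1) ^ n * ((AB ω n).1 * (AB ω (n + 1)).2 - (AB ω (n + 1)).1 * (AB ω n).2) := by ring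
      _ = 1 := by rw [h, this]⟩

lemma sqrt5_sq : Real.sqrt 5 ^ 2 = 5 := Real.sq_sqrt (by norm_num)

lemma phi_gt_one : 1 < φ := by
  have h1 : (1:ℝ) < Real.sqrt 5 := by
    nlinarith [sqrt5_sq, Real.sqrt_nonneg 5]
  linarith

lemma phi_le_two : φ ≤ 2 := by
  have : Real.sqrt 5 ≤ 3 := by nlinarith [sqrt5_sq, Real.sqrt_nonneg 5]
  linarith

lemma phi_sq : φ ^ 2 = φ + 1 := by
  have := sqrt5_sq
  ring_nf
  nlinarith [sqrt5_sq]

lemma phi_pow_le_fib : ∀ n : ℕ, φ ^ n ≤ (Nat.fib (n + 2) : ℝ) := by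
  refine two_step ?_ ?_ ?_
  · simp
  · have : Nat.fib 3 = 2 := by decide
    rw [this, pow_one]
    exact_mod_cast phi_le_two
  · intro n ih1 ih2
    have hrec : Nat.fib (n + 4) = Nat.fib (n + 3) + Nat.fib (n + 2) := by
      rw [show n + 4 = (n + 2) + 2 by ring, Nat.fib_add_two]
      ring
    have : φ ^ (n + 2) = φ ^ (n + 1) + φ ^ n := by
      calc φ ^ (n + 2) = φ ^ n * φ ^ 2 := by ring
        _ = φ ^ n * (φ + 1) := by rw [phi_sq]
        _ = φ ^ (n + 1) + φ ^ n := by ring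
    rw [show n + 2 + 2 = n + 4 from rfl, hrec, this]
    push_cast
    exact add_le_add ih2 ih1

lemma dens_eq {ω : ℝ} (hω : Irrational ω) (hm : ω ∈ Ioo (0:ℝ) 1) (n : ℕ) :
    (GenContFract.of ω).dens n = ((AB ω (n + 1)).2 : ℝ) := by
  rw [den_eq_conts_b, nth_cont_eq_succ_nth_contAux, contsAux_eq hω hm]

lemma phiB {ω : ℝ} (hω : Irrational ω) (hm : ω ∈ Ioo (0:ℝ) 1) (n : ℕ) :
    φ ^ n ≤ φ * ((AB ω (n + 1)).2 : ℝ) := by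
  cases n with
  | zero => simpa [AB] using phi_gt_one.le
  | succ m =>
    have h1 : φ ^ m ≤ (Nat.fib (m + 2) : ℝ) := phi_pow_le_fib m
    have h2 : (Nat.fib (m + 2) : ℝ) ≤ (GenContFract.of ω).dens (m + 1) :=
      succ_nth_fib_le_of_nth_den (Or.inr (by simpa using not_term hω hm m))
    rw [dens_eq hω hm] at h2
    calc φ ^ (m + 1) = φ * φ ^ m := by ring
      _ ≤ φ * ((AB ω (m + 2)).2 : ℝ) := by
          have := h1.trans h2
          exact mul_le_mul_of_nonneg_left this (by linarith [phi_gt_one])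

lemma err_ge {ω : ℝ} (hω : Irrational ω) (hm : ω ∈ Ioo (0:ℝ) 1) (n : ℕ) :
    1 / (((pq ω (n + 1) : ℝ) + 2) * ((AB ω (n + 1)).2 : ℝ) ^ 2)
      ≤ |ω - (GenContFract.of ω).convs n| := by
  have hsub := sub_convs_eq (stream_eq hω hm n)
  set f := gaussMap^[n] ω with hf
  have hfm := iter_mem hω hm n
  have hf0 : 0 < f := hfm.2.1
  have hf1 : f < 1 := hfm.2.2
  simp only [ne_of_gt hf0, if_false] at hsub
  rw [contsAux_eq hω hm n, contsAux_eq hω hm (n + 1)] at hsub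
  set Br : ℝ := ((AB ω (n + 1)).2 : ℝ) with hBr
  set pBr : ℝ := ((AB ω n).2 : ℝ) with hpBr
  set a : ℝ := (pq ω (n + 1) : ℝ) with ha
  obtain ⟨hB0, hBle, hB1⟩ := AB_B_facts hω hm n
  have hBr1 : (1:ℝ) ≤ Br := by rw [hBr]; exact_mod_cast hB1
  have hpBr0 : (0:ℝ) ≤ pBr := by rw [hpBr]; exact_mod_cast hB0
  have hple : pBr ≤ Br := by rw [hBr, hpBr]; exact_mod_cast hBle
  have hfi : 0 < f⁻¹ := inv_pos.mpr hf0
  have hfloor : f⁻¹ < a + 1 := by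
    have : pq ω (n + 1) = ⌊f⁻¹⌋ := by simp [pq, one_div, hf]
    rw [ha, this]
    exact_mod_cast Int.lt_floor_add_one f⁻¹
  have ha1 : (1:ℝ) ≤ a := by rw [ha]; exact_mod_cast pq_one_le hω hm n
  have hd : 0 < Br * (f⁻¹ * Br + pBr) := by positivity
  have habs : |ω - (GenContFract.of ω).convs n| = 1 / (Br * (f⁻¹ * Br + pBr)) := by
    rw [hsub, abs_div, abs_neg_one_pow, abs_of_pos hd]
  rw [habs]
  apply one_div_le_one_div_of_le
  · positivity
  · nlinarith

lemma one_le_Mprod {ω : ℝ} (hω : Irrational ω) (hm : ω ∈ Ioo (0:ℝ) 1) (n : ℕ) :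
    1 ≤ Mprod ω n := by
  rw [Mprod]
  calc (1:ℝ) = ∏ _j ∈ Finset.Icc 1 n, (1:ℝ) := by simp
    _ ≤ _ := by
      refine Finset.prod_le_prod (fun i _ => zero_le_one) ?_
      intro j hj
      have hj1 : 1 ≤ j := (Finset.mem_Icc.mp hj).1
      obtain ⟨m, rfl⟩ : ∃ m, j = m + 1 := ⟨j - 1, (Nat.succ_pred_eq_of_pos hj1).symm⟩
      exact_mod_cast pq_one_le hω hm m

lemma Mprod_succ {ω : ℝ} (n : ℕ) :
    Mprod ω (n + 1) = Mprod ω n * (pq ω (n + 1) : ℝ) := by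
  exact Finset.prod_Icc_succ_top (a := 1) (b := n) (by omega) _

lemma exists_K {ω Tminus Tplus : ℝ} {N : ℕ} (hω : Irrational ω)
    (hm : ω ∈ Ioo (0:ℝ) 1) (hTm : 0 < Tminus) (hTp : 0 < Tplus)
    (hKL : ∀ n : ℕ, N ≤ n →
      Real.exp ((kappa - Tminus) * n) ≤ Mprod ω n ∧ Mprod ω n ≤ Real.exp ((kappa + Tplus) * n)) :
    ∃ K : ℝ, 1 ≤ K ∧ ∀ n : ℕ,
      ((pq ω (n + 1) : ℝ) + 2) ≤ K * Real.exp ((Tplus + Tminus) * n) := by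
  set E := Real.exp (kappa + Tplus) with hE
  set S := (Finset.range (N + 1)).sup' ⟨0, by simp⟩ (fun m => (pq ω (m + 1) : ℝ) + 2) with hS
  refine ⟨max (E + 2) S, le_trans (by linarith [Real.exp_pos (kappa + Tplus)] : (1:ℝ) ≤ E + 2) (le_max_left _ _), fun n => ?_⟩
  have hX1 : 1 ≤ Real.exp ((Tplus + Tminus) * n) := by
    apply Real.one_le_exp
    positivity
  rcases le_or_gt N n with hn | hn
  · -- large n
    have h1 := (hKL (n + 1) (le_trans hn (Nat.le_succ n))).2
    have h2 := (hKL n hn).1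
    have hMpos : 0 < Mprod ω n := lt_of_lt_of_le one_pos (one_le_Mprod hω hm n)
    have ha0 : (0:ℝ) ≤ (pq ω (n + 1) : ℝ) := by
      have := pq_one_le hω hm n; exact_mod_cast le_trans zero_le_one this
    have key : (pq ω (n + 1) : ℝ) ≤ E * Real.exp ((Tplus + Tminus) * n) := by
      have hL : 0 < Real.exp ((kappa - Tminus) * n) := Real.exp_pos _
      have step : (pq ω (n + 1) : ℝ) * Real.exp ((kappa - Tminus) * n)
          ≤ Real.exp ((kappa + Tplus) * (n + 1 : ℕ)) := by
        calc (pq ω (n + 1) : ℝ) * Real.exp ((kappa - Tminus) * n)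
            ≤ (pq ω (n + 1) : ℝ) * Mprod ω n := by
              exact mul_le_mul_of_nonneg_left h2 ha0
          _ = Mprod ω (n + 1) := by rw [Mprod_succ]; ring
          _ ≤ _ := h1
      rw [← le_div_iff₀ hL] at step
      calc (pq ω (n + 1) : ℝ)
          ≤ Real.exp ((kappa + Tplus) * (n + 1 : ℕ)) / Real.exp ((kappa - Tminus) * n) := step
        _ = E * Real.exp ((Tplus + Tminus) * n) := by
            rw [← Real.exp_sub, hE, ← Real.exp_add]
            congr 1
            push_cast
            ring
    have hEX : 0 ≤ Real.exp ((Tplus + Tminus) * n) := (Real.exp_pos _).le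
    calc (pq ω (n + 1) : ℝ) + 2
        ≤ E * Real.exp ((Tplus + Tminus) * n) + 2 * Real.exp ((Tplus + Tminus) * n) := by
          have : (2:ℝ) ≤ 2 * Real.exp ((Tplus + Tminus) * n) := by linarith
          linarith [key]
      _ = (E + 2) * Real.exp ((Tplus + Tminus) * n) := by ring
      _ ≤ _ := by
          apply mul_le_mul_of_nonneg_right (le_max_left _ _) hEX
  · -- small n
    have hmem : n ∈ Finset.range (N + 1) := Finset.mem_range.mpr (by omega)
    have h1 : (pq ω (n + 1) : ℝ) + 2 ≤ S := Finset.le_sup' (fun m => (pq ω (m + 1) : ℝ) + 2) hmem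
    calc (pq ω (n + 1) : ℝ) + 2 ≤ S := h1
      _ ≤ max (E + 2) S := le_max_right _ _
      _ = max (E + 2) S * 1 := (mul_one _).symm
      _ ≤ _ := by
          apply mul_le_mul_of_nonneg_left hX1
          positivity

theorem KL_two_sided_imp_diophantine (ω Tminus Tplus : ℝ) (N : ℕ) (hω : Irrational ω)
    (hmem : ω ∈ Ioo (0 : ℝ) 1) (hTm : 0 < Tminus) (hTp : 0 < Tplus)
    (hKL : ∀ n : ℕ, N ≤ n →
      Real.exp ((kappa - Tminus) * n) ≤ Mprod ω n ∧ Mprod ω n ≤ Real.exp ((kappa + Tplus) * n)) :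
    ∃ C : ℝ, 0 < C ∧
      IsDiophantine C (1 + (Tplus + Tminus) / Real.log ((1 + Real.sqrt 5) / 2)) ω := by
  obtain ⟨K, hK1, hKb⟩ := exists_K hω hmem hTm hTp hKL
  have hφ1 : (1:ℝ) < φ := phi_gt_one
  have hφ0 : (0:ℝ) < φ := by linarith
  have hlφ : 0 < Real.log φ := Real.log_pos hφ1
  set τ : ℝ := 1 + (Tplus + Tminus) / Real.log φ with hτ
  have hτ1 : 1 ≤ τ := by
    have h : 0 < (Tplus + Tminus) / Real.log φ := by positivity
    rw [hτ]; linarith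
  have hτid : (τ - 1) * Real.log φ = Tplus + Tminus := by
    rw [hτ]; field_simp; ring
  have hφτ : 0 < φ ^ (τ - 1) := Real.rpow_pos_of_pos hφ0 _
  have hK0 : (0:ℝ) < K := by linarith
  have hKφ : 0 < K * φ ^ (τ - 1) := by positivity
  refine ⟨min (1/2) (1 / (K * φ ^ (τ - 1))), by positivity, ?_⟩
  intro p q hq
  have hq1 : (1:ℝ) ≤ (q:ℝ) := by exact_mod_cast hq
  have hq0 : (0:ℝ) < (q:ℝ) := by linarith
  have hqτpos : 0 < (q:ℝ) ^ τ := Real.rpow_pos_of_pos hq0 _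
  have hqτ : (q:ℝ) ≤ (q:ℝ) ^ τ := by
    calc (q:ℝ) = (q:ℝ) ^ (1:ℝ) := (Real.rpow_one _).symm
      _ ≤ _ := Real.rpow_le_rpow_of_exponent_le hq1 hτ1
  have habs : |(q:ℝ) * ω - (p:ℝ)| = (q:ℝ) * |ω - (p:ℝ)/(q:ℝ)| := by
    have h : (q:ℝ) * ω - (p:ℝ) = (q:ℝ) * (ω - (p:ℝ)/(q:ℝ)) := by
      field_simp
    rw [h, abs_mul, abs_of_pos hq0]
  by_cases hcase : |ω - (p:ℝ)/(q:ℝ)| < 1 / (2 * (q:ℝ)^2)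
  · -- Legendre case
    set rq : ℚ := (p:ℚ)/(q:ℚ) with hrq
    have hrqcast : (rq:ℝ) = (p:ℝ)/(q:ℝ) := by rw [hrq]; push_cast; ring
    have hden_dvd : (rq.den : ℤ) ∣ q := by
      rw [hrq, ← Rat.divInt_eq_div]; exact Rat.den_dvd p q
    have hden_le : (rq.den : ℤ) ≤ q := Int.le_of_dvd hq hden_dvd
    have hleg : |ω - (rq:ℝ)| < 1 / (2 * (rq.den:ℝ)^2) := by
      rw [hrqcast]
      refine hcase.trans_le ?_
      have hd0 : (0:ℝ) < (rq.den:ℝ) := by exact_mod_cast rq.pos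
      have hdq : (rq.den : ℝ) ≤ (q:ℝ) := by exact_mod_cast hden_le
      apply one_div_le_one_div_of_le
      · positivity
      · nlinarith
    obtain ⟨n, hn⟩ := Real.exists_convs_eq_rat hleg
    obtain ⟨-, -, hB1⟩ := AB_B_facts hω hmem n
    have hB0 : (0:ℤ) < (AB ω (n+1)).2 := by omega
    have hconv : (GenContFract.of ω).convs n
        = ((AB ω (n+1)).1 : ℝ) / ((AB ω (n+1)).2 : ℝ) := by
      rw [conv_eq_conts_a_div_conts_b, nth_cont_eq_succ_nth_contAux, contsAux_eq hω hmem]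
    have hABq : rq = ((AB ω (n+1)).1 : ℚ) / ((AB ω (n+1)).2 : ℚ) := by
      have : (rq:ℝ) = ((((AB ω (n+1)).1 : ℚ) / ((AB ω (n+1)).2 : ℚ) : ℚ) : ℝ) := by
        push_cast
        rw [← hconv, hn]
      exact_mod_cast this
    have hdenB : (rq.den : ℤ) = (AB ω (n+1)).2 := by
      rw [hABq]
      exact Rat.den_div_eq_of_coprime hB0 (Int.isCoprime_iff_gcd_eq_one.mp (AB_coprime n))
    have hBle : ((AB ω (n+1)).2 : ℝ) ≤ (q:ℝ) := by
      rw [← hdenB] at hB0 ⊢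
      exact_mod_cast hden_le
    have hBr1 : (1:ℝ) ≤ ((AB ω (n+1)).2 : ℝ) := by exact_mod_cast hB1
    have ha1 : (1:ℝ) ≤ (pq ω (n+1) : ℝ) := by exact_mod_cast pq_one_le hω hmem n
    have herr : 1 / (((pq ω (n+1) : ℝ) + 2) * ((AB ω (n+1)).2:ℝ)^2) ≤ |ω - (p:ℝ)/(q:ℝ)| := by
      have h := err_ge hω hmem n
      rwa [hn, hrqcast] at h
    have hexp : Real.exp ((Tplus + Tminus) * n) = (φ ^ n) ^ (τ - 1) := by
      rw [Real.rpow_def_of_pos (pow_pos hφ0 n), Real.log_pow, ← hτid]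
      ring_nf
    have ha2 : (pq ω (n+1) : ℝ) + 2 ≤ K * (φ ^ (τ-1) * ((AB ω (n+1)).2:ℝ) ^ (τ-1)) := by
      have h1 := hKb n
      rw [hexp] at h1
      refine h1.trans ?_
      have h2 : (φ ^ n) ^ (τ-1) ≤ (φ * ((AB ω (n+1)).2:ℝ)) ^ (τ-1) :=
        Real.rpow_le_rpow (by positivity) (phiB hω hmem n) (by linarith)
      have h3 : (φ * ((AB ω (n+1)).2:ℝ)) ^ (τ-1)
          = φ ^ (τ-1) * ((AB ω (n+1)).2:ℝ) ^ (τ-1) :=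
        Real.mul_rpow hφ0.le (by linarith)
      rw [← h3]
      exact mul_le_mul_of_nonneg_left h2 (by linarith)
    have hBrq : ((AB ω (n+1)).2:ℝ) ^ (τ-1) ≤ (q:ℝ) ^ (τ-1) :=
      Real.rpow_le_rpow (by linarith) hBle (by linarith)
    have hqid : (q:ℝ)^(τ-1) * (q:ℝ)^2 = (q:ℝ)^τ * (q:ℝ) := by
      calc (q:ℝ)^(τ-1) * (q:ℝ)^2 = (q:ℝ)^(τ-1) * (q:ℝ)^((2:ℕ):ℝ) := by
            rw [Real.rpow_natCast]
        _ = (q:ℝ)^(τ-1+((2:ℕ):ℝ)) := (Real.rpow_add hq0 _ _).symm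
        _ = (q:ℝ)^(τ+(1:ℝ)) := by congr 1; push_cast; ring
        _ = (q:ℝ)^τ * (q:ℝ)^(1:ℝ) := Real.rpow_add hq0 _ _
        _ = (q:ℝ)^τ * (q:ℝ) := by rw [Real.rpow_one]
    have hbig : ((pq ω (n+1) : ℝ) + 2) * ((AB ω (n+1)).2:ℝ)^2
        ≤ (K * φ^(τ-1)) * ((q:ℝ)^τ * (q:ℝ)) := by
      have hB2 : ((AB ω (n+1)).2:ℝ)^2 ≤ (q:ℝ)^2 := by nlinarith
      have hq2 : (0:ℝ) ≤ ((AB ω (n+1)).2:ℝ)^2 := by positivity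
      have h4 : ((pq ω (n+1) : ℝ) + 2) * ((AB ω (n+1)).2:ℝ)^2
          ≤ (K * (φ^(τ-1) * (q:ℝ)^(τ-1))) * (q:ℝ)^2 := by
        have h5 : (pq ω (n+1) : ℝ) + 2 ≤ K * (φ^(τ-1) * (q:ℝ)^(τ-1)) := by
          refine ha2.trans ?_
          exact mul_le_mul_of_nonneg_left (mul_le_mul_of_nonneg_left hBrq hφτ.le) hK0.le
        have h6 : (0:ℝ) < K * (φ^(τ-1) * (q:ℝ)^(τ-1)) := by positivity
        exact mul_le_mul h5 hB2 hq2 h6.le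
      calc ((pq ω (n+1) : ℝ) + 2) * ((AB ω (n+1)).2:ℝ)^2
          ≤ (K * (φ^(τ-1) * (q:ℝ)^(τ-1))) * (q:ℝ)^2 := h4
        _ = (K * φ^(τ-1)) * ((q:ℝ)^(τ-1) * (q:ℝ)^2) := by ring
        _ = (K * φ^(τ-1)) * ((q:ℝ)^τ * (q:ℝ)) := by rw [hqid]
    rw [habs]
    have hpos2 : (0:ℝ) < ((pq ω (n+1) : ℝ) + 2) * ((AB ω (n+1)).2:ℝ)^2 := by positivity
    calc min (1/2) (1 / (K * φ ^ (τ - 1))) / (q:ℝ)^τ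
        ≤ (1 / (K * φ ^ (τ - 1))) / (q:ℝ)^τ := by
          gcongr
          exact min_le_right _ _
      _ ≤ (q:ℝ) * (1 / (((pq ω (n+1) : ℝ) + 2) * ((AB ω (n+1)).2:ℝ)^2)) := by
          rw [mul_one_div, div_le_div_iff₀ hqτpos hpos2]
          calc (1 / (K * φ ^ (τ - 1))) * (((pq ω (n+1) : ℝ) + 2) * ((AB ω (n+1)).2:ℝ)^2)
              ≤ (1 / (K * φ ^ (τ - 1))) * ((K * φ^(τ-1)) * ((q:ℝ)^τ * (q:ℝ))) := by
                exact mul_le_mul_of_nonneg_left hbig (by positivity)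
            _ = (q:ℝ)^τ * (q:ℝ) := by field_simp
            _ = (q:ℝ) * (q:ℝ)^τ := by ring
      _ ≤ (q:ℝ) * |ω - (p:ℝ)/(q:ℝ)| := mul_le_mul_of_nonneg_left herr hq0.le
  · -- trivial case
    rw [habs]
    have h := not_lt.mp hcase
    calc min (1/2) (1 / (K * φ ^ (τ - 1))) / (q:ℝ)^τ
        ≤ (1/2) / (q:ℝ)^τ := by
          gcongr
          exact min_le_left _ _
      _ ≤ (1/2) / (q:ℝ) := div_le_div_of_nonneg_left (by norm_num) hq0 hqτ
      _ ≤ (q:ℝ) * |ω - (p:ℝ)/(q:ℝ)| := by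
          have : (1:ℝ) / (2 * (q:ℝ)^2) ≤ |ω - (p:ℝ)/(q:ℝ)| := h
          calc (1/2) / (q:ℝ) = (q:ℝ) * (1 / (2 * (q:ℝ)^2)) := by field_simp
            _ ≤ (q:ℝ) * |ω - (p:ℝ)/(q:ℝ)| := mul_le_mul_of_nonneg_left this hq0.le
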